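/- Define ν : Z × W → ℝ by ν(z,w) := exp(−β(H_A(z) + ⟨Cz, w⟩ + (1/2)‖w‖²)). Then for every (z, w) ∈ Z × W: (i) div_z[ν(z,w)·J_A(z)(∇H_A(z) + C*w)] = 0, and (ii) div_w[ν(z,w)·D(w + Cz)] + β⁻¹·div_w[D_sym(∇_w ν(z,w))] = 0, where div_z and div_w denote divergences in the z- and w-variables with respect to orthonormal coordinates and ∇_w ν is the gradient of ν in the w-variable. In particular the unnormalized measure ν(z,w) dz dw is stationary for the Fokker–Planck operator of the coarse-grained evolution. -/

import Mathlib

open RealInnerProductSpace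

section helperlemmas
open InnerProductSpace
variable {E : Type*} [NormedAddCommGroup E] [InnerProductSpace ℝ E]

lemma aux_hasFDerivAt_exp_neg_mul (β : ℝ) {ψ : E → ℝ} {p : E} {x : E}
    (h : HasFDerivAt ψ (innerSL ℝ p) x) :
    HasFDerivAt (fun y => Real.exp (-β * ψ y))
      (innerSL ℝ ((-β * Real.exp (-β * ψ x)) • p)) x := by
  have h1 : HasFDerivAt (fun y => -β * ψ y) ((-β) • (innerSL ℝ p : E →L[ℝ] ℝ)) x :=
    h.const_mul (-β)
  have h2 := h1.exp
  convert h2 using 1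
  ext y
  simp [real_inner_smul_left]
  ring

lemma aux_halfnormsq (w' : E) :
    HasFDerivAt (fun w'' : E => (1 / 2 : ℝ) * ‖w''‖ ^ 2) (innerSL ℝ w') w' := by
  have h3 := (hasStrictFDerivAt_norm_sq w').hasFDerivAt.const_mul (1 / 2 : ℝ)
  refine h3.congr_fderiv ?_
  ext y
  simp only [ContinuousLinearMap.smul_apply, innerSL_apply_apply, smul_eq_mul, nsmul_eq_mul]
  ring

end helperlemmas

set_option maxHeartbeats 1000000 in
/-- Define `ν(z,w) := exp(−β(H_A(z) + ⟨Cz,w⟩ + ½‖w‖²))`.  Then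
(i) `div_z[ν(z,w)·J_A(z)(∇H_A(z) + C*w)] = 0` and
(ii) `div_w[ν(z,w)·D(w + Cz)] + β⁻¹·div_w[D_sym(∇_w ν(z,w))] = 0`,
where the divergences are computed with respect to orthonormal coordinates (i.e.
orthonormal bases of `Z` resp. `W`).  In particular the unnormalized measure
`ν(z,w) dz dw` is stationary for the Fokker–Planck operator of the coarse-grained
evolution. -/
theorem invariant_measure_divergence_identities
    {Z : Type*} [NormedAddCommGroup Z] [InnerProductSpace ℝ Z] [FiniteDimensional ℝ Z]
    {W : Type*} [NormedAddCommGroup W] [InnerProductSpace ℝ W] [FiniteDimensional ℝ W]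
    (β : ℝ) (hβ : 0 < β)
    (C : Z →L[ℝ] W)
    (HA : Z → ℝ) (hHA : ContDiff ℝ 2 HA)
    (D : W →L[ℝ] W)
    (JA : Z → Z →L[ℝ] Z) (hJAsmooth : ContDiff ℝ 1 JA)
    (hJAskew : ∀ z : Z, ContinuousLinearMap.adjoint (JA z) = -(JA z))
    (bz : OrthonormalBasis (Fin (Module.finrank ℝ Z)) ℝ Z)
    -- div_z J_A = 0 : in orthonormal coordinates Σ_j ∂_{z_j}(J_A(z))_{ij} = 0
    (hJAdiv : ∀ (z : Z) (i : Fin (Module.finrank ℝ Z)),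
      ∑ j, fderiv ℝ (fun z' : Z => ⟪bz i, JA z' (bz j)⟫) z (bz j) = 0)
    (ν : Z → W → ℝ)
    (hν : ν = fun z w => Real.exp (-β * (HA z + ⟪C z, w⟫ + (1 / 2) * ‖w‖ ^ 2))) :
    ∀ (z : Z) (w : W),
      -- (i) the z-divergence of z' ↦ ν(z',w)·J_A(z')(∇H_A(z') + C*w) vanishes
      (∑ i, ⟪fderiv ℝ
          (fun z' : Z => ν z' w •
            (JA z') (gradient HA z' + ContinuousLinearMap.adjoint C w))
          z (bz i), bz i⟫ = 0) ∧
      -- (ii) the w-divergence identity, for every orthonormal basis of W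
      ∀ bw : OrthonormalBasis (Fin (Module.finrank ℝ W)) ℝ W,
        (∑ i, ⟪fderiv ℝ (fun w' : W => ν z w' • D (w' + C z)) w (bw i), bw i⟫)
          + β⁻¹ * (∑ i, ⟪fderiv ℝ
              (fun w' : W => (((1 : ℝ) / 2) • (D + ContinuousLinearMap.adjoint D))
                (gradient (fun u : W => ν z u) w'))
              w (bw i), bw i⟫) = 0 := by
  intro z w
  constructor
  · ---------------------------------------------------------------- PART (i)
    simp only [hν]
    set a : Z := ContinuousLinearMap.adjoint C w with hadef
    set v : Z := gradient HA z + a with hvdef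
    -- derivative of HA
    have hHAd : DifferentiableAt ℝ HA z := (hHA.differentiable (by norm_num)).differentiableAt
    have hfHA : HasFDerivAt HA (innerSL ℝ (gradient HA z)) z := by
      have h := hHAd.hasFDerivAt
      have he : (innerSL ℝ (gradient HA z) : Z →L[ℝ] ℝ) = fderiv ℝ HA z := by
        have : (innerSL ℝ (gradient HA z) : Z →L[ℝ] ℝ)
            = InnerProductSpace.toDual ℝ Z (gradient HA z) := by
          ext y; simp [InnerProductSpace.toDual_apply_apply]
        rw [this]
        exact (InnerProductSpace.toDual ℝ Z).apply_symm_apply (fderiv ℝ HA z)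
      rwa [he]
    have hinnerC : HasFDerivAt (fun z' : Z => ⟪C z', w⟫) (innerSL ℝ a) z := by
      have h : (fun z' : Z => ⟪C z', w⟫) = fun z' : Z => (innerSL ℝ a : Z →L[ℝ] ℝ) z' := by
        funext z'
        simp only [innerSL_apply_apply, hadef, ContinuousLinearMap.adjoint_inner_left]
        exact real_inner_comm _ _
      rw [h]
      exact (innerSL ℝ a).hasFDerivAt
    have hψ : HasFDerivAt (fun z' : Z => HA z' + ⟪C z', w⟫ + (1 / 2) * ‖w‖ ^ 2)
        (innerSL ℝ v) z := by
      have h := (hfHA.add hinnerC).add_const ((1 / 2) * ‖w‖ ^ 2)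
      rwa [hvdef, map_add]
    have hfz : HasFDerivAt
        (fun z' : Z => Real.exp (-β * (HA z' + ⟪C z', w⟫ + (1 / 2) * ‖w‖ ^ 2)))
        (innerSL ℝ ((-β * Real.exp (-β * (HA z + ⟪C z, w⟫ + (1 / 2) * ‖w‖ ^ 2))) • v)) z :=
      aux_hasFDerivAt_exp_neg_mul β hψ
    set fz : ℝ := Real.exp (-β * (HA z + ⟪C z, w⟫ + (1 / 2) * ‖w‖ ^ 2)) with hfzdef
    -- second derivative of HA
    have hfd1 : ContDiff ℝ 1 (fderiv ℝ HA) := hHA.fderiv_right (by norm_num)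
    have hF'' : HasFDerivAt (fderiv ℝ HA) (fderiv ℝ (fderiv ℝ HA) z) z :=
      ((hfd1.differentiable one_ne_zero) z).hasFDerivAt
    set F'' := fderiv ℝ (fderiv ℝ HA) z with hF''def
    -- derivative of the gradient of HA, via orthonormal expansion
    have hgradrep : gradient HA = fun y => ∑ i, (fderiv ℝ HA y (bz i)) • bz i := by
      funext y
      have h := bz.sum_repr' (gradient HA y)
      rw [← h]
      refine Finset.sum_congr rfl fun i _ => ?_
      congr 1
      rw [real_inner_comm]
      exact InnerProductSpace.toDual_symm_apply
    set B : Z →L[ℝ] Z :=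
      ∑ i, ((ContinuousLinearMap.apply ℝ ℝ (bz i)).comp F'').smulRight (bz i) with hBdef
    have hB : HasFDerivAt (gradient HA) B z := by
      rw [hgradrep, hBdef]
      exact HasFDerivAt.fun_sum fun i _ =>
        (((ContinuousLinearMap.apply ℝ ℝ (bz i)).hasFDerivAt.comp z hF'').smul_const (bz i))
    have hlfun : ∀ (ℓ : Z →L[ℝ] ℝ) (y : Z), ℓ y = ∑ i, ⟪bz i, y⟫ * ℓ (bz i) := by
      intro ℓ y
      conv_lhs => rw [← bz.sum_repr' y]
      rw [map_sum]
      refine Finset.sum_congr rfl fun i _ => ?_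
      rw [map_smul, smul_eq_mul]
    have hBapp : ∀ x y : Z, ⟪B x, y⟫ = F'' x y := by
      intro x y
      rw [hBdef]
      simp only [ContinuousLinearMap.sum_apply, ContinuousLinearMap.smulRight_apply,
        ContinuousLinearMap.coe_comp', Function.comp_apply,
        ContinuousLinearMap.apply_apply, sum_inner, real_inner_smul_left]
      rw [hlfun (F'' x) y]
      refine Finset.sum_congr rfl fun i _ => ?_
      rw [mul_comm]
    have hsym := (hHA.contDiffAt (x := z)).isSymmSndFDerivAt (by simp)
    have hBsymm : ∀ x y : Z, ⟪B x, y⟫ = ⟪B y, x⟫ := by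
      intro x y
      rw [hBapp, hBapp]
      exact hsym x y
    -- derivative of JA
    have hJ : HasFDerivAt JA (fderiv ℝ JA z) z :=
      ((hJAsmooth.differentiable one_ne_zero) z).hasFDerivAt
    set J' := fderiv ℝ JA z with hJ'def
    -- skewness pointwise
    have hskew : ∀ (z' : Z) (x y : Z), ⟪JA z' x, y⟫ = -⟪x, JA z' y⟫ := by
      intro z' x y
      rw [← ContinuousLinearMap.adjoint_inner_right (JA z'), hJAskew]
      simp
    -- derivative of matrix entries
    have hkey : ∀ (c u : Z), HasFDerivAt (fun z' : Z => ⟪c, JA z' u⟫)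
        (((innerSL ℝ c).comp (ContinuousLinearMap.apply ℝ Z u)).comp J') z := by
      intro c u
      exact ((innerSL ℝ c).comp (ContinuousLinearMap.apply ℝ Z u)).hasFDerivAt.comp z hJ
    have hkeyapp : ∀ (c u e : Z),
        fderiv ℝ (fun z' : Z => ⟪c, JA z' u⟫) z e = ⟪c, (J' e) u⟫ := by
      intro c u e
      rw [(hkey c u).fderiv]
      rfl
    have hJAdiv' : ∀ i, ∑ j, ⟪bz i, (J' (bz j)) (bz j)⟫ = 0 := by
      intro i
      have h := hJAdiv z i
      calc ∑ j, ⟪bz i, (J' (bz j)) (bz j)⟫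
          = ∑ j, fderiv ℝ (fun z' : Z => ⟪bz i, JA z' (bz j)⟫) z (bz j) :=
            Finset.sum_congr rfl fun j _ => (hkeyapp (bz i) (bz j) (bz j)).symm
        _ = 0 := h
    have hkey2 : ∀ (x y e : Z), ⟪y, (J' e) x⟫ = -⟪x, (J' e) y⟫ := by
      intro x y e
      have hfun : (fun z' : Z => ⟪y, JA z' x⟫) = (fun z' : Z => -⟪x, JA z' y⟫) := by
        funext z'
        rw [real_inner_comm, hskew]
      have h1 := hkey y x
      rw [hfun] at h1
      have h2 := (hkey x y).neg
      have h3 := h1.unique h2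
      have h4 := ContinuousLinearMap.ext_iff.mp h3 e
      simpa using h4
    -- derivative of z' ↦ JA z' (gradient HA z' + a)
    have hvf : HasFDerivAt (fun z' : Z => gradient HA z' + a) B z := hB.add_const a
    have hG : HasFDerivAt (fun z' : Z => JA z' (gradient HA z' + a))
        ((JA z).comp B + J'.flip v) z := hJ.clm_apply hvf
    have hfG : HasFDerivAt
        (fun z' : Z => Real.exp (-β * (HA z' + ⟪C z', w⟫ + (1 / 2) * ‖w‖ ^ 2)) •
          JA z' (gradient HA z' + a))
        (fz • ((JA z).comp B + J'.flip v)
          + (innerSL ℝ ((-β * fz) • v)).smulRight (JA z v)) z := hfz.smul hG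
    rw [hfG.fderiv]
    have hterm : ∀ i, ⟪(fz • ((JA z).comp B + J'.flip v)
        + (innerSL ℝ ((-β * fz) • v)).smulRight (JA z v)) (bz i), bz i⟫
        = fz * ⟪JA z (B (bz i)), bz i⟫ + fz * ⟪(J' (bz i)) v, bz i⟫
          + (-β * fz) * (⟪v, bz i⟫ * ⟪JA z v, bz i⟫) := by
      intro i
      simp only [ContinuousLinearMap.add_apply, ContinuousLinearMap.smul_apply,
        ContinuousLinearMap.smulRight_apply, ContinuousLinearMap.coe_comp',
        Function.comp_apply, ContinuousLinearMap.flip_apply, innerSL_apply_apply,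
        inner_add_left, real_inner_smul_left, smul_eq_mul]
      ring
    simp only [hterm]
    rw [Finset.sum_add_distrib, Finset.sum_add_distrib,
      ← Finset.mul_sum, ← Finset.mul_sum, ← Finset.mul_sum]
    have hS1 : ∑ i, ⟪v, bz i⟫ * ⟪JA z v, bz i⟫ = 0 := by
      have h0 : ⟪v, JA z v⟫ = 0 := by
        have h1 := hskew z v v
        have h2 := real_inner_comm (JA z v) v
        linarith
      calc ∑ i, ⟪v, bz i⟫ * ⟪JA z v, bz i⟫
          = ∑ i, ⟪v, bz i⟫ * ⟪bz i, JA z v⟫ := by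
            refine Finset.sum_congr rfl fun i _ => ?_
            rw [real_inner_comm (JA z v)]
        _ = ⟪v, JA z v⟫ := bz.sum_inner_mul_inner v (JA z v)
        _ = 0 := h0
    have hS2 : ∑ i, ⟪JA z (B (bz i)), bz i⟫ = 0 := by
      have hrep : ∀ i, ⟪JA z (B (bz i)), bz i⟫
          = -∑ j, ⟪B (bz i), bz j⟫ * ⟪bz j, JA z (bz i)⟫ := by
        intro i
        rw [hskew z (B (bz i)) (bz i),
          ← bz.sum_inner_mul_inner (B (bz i)) (JA z (bz i))]
      simp only [hrep]
      rw [Finset.sum_neg_distrib, neg_eq_zero]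
      have hswap : ∀ i j, ⟪B (bz j), bz i⟫ * ⟪bz i, JA z (bz j)⟫
          = -(⟪B (bz i), bz j⟫ * ⟪bz j, JA z (bz i)⟫) := by
        intro i j
        rw [hBsymm (bz j) (bz i), real_inner_comm (JA z (bz j)) (bz i),
          hskew z (bz j) (bz i)]
        ring
      have hTT : (∑ i, ∑ j, ⟪B (bz i), bz j⟫ * ⟪bz j, JA z (bz i)⟫)
          = -(∑ i, ∑ j, ⟪B (bz i), bz j⟫ * ⟪bz j, JA z (bz i)⟫) := by
        calc (∑ i, ∑ j, ⟪B (bz i), bz j⟫ * ⟪bz j, JA z (bz i)⟫)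
            = ∑ i, ∑ j, ⟪B (bz j), bz i⟫ * ⟪bz i, JA z (bz j)⟫ := Finset.sum_comm
          _ = ∑ i, ∑ j, -(⟪B (bz i), bz j⟫ * ⟪bz j, JA z (bz i)⟫) :=
              Finset.sum_congr rfl fun i _ => Finset.sum_congr rfl fun j _ => hswap i j
          _ = -(∑ i, ∑ j, ⟪B (bz i), bz j⟫ * ⟪bz j, JA z (bz i)⟫) := by
              simp only [Finset.sum_neg_distrib]
      linarith
    have hS3 : ∑ i, ⟪(J' (bz i)) v, bz i⟫ = 0 := by
      have hrep : ∀ i, ⟪(J' (bz i)) v, bz i⟫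
          = -∑ j, ⟪v, bz j⟫ * ⟪bz j, (J' (bz i)) (bz i)⟫ := by
        intro i
        rw [real_inner_comm, hkey2 v (bz i) (bz i),
          ← bz.sum_inner_mul_inner v ((J' (bz i)) (bz i))]
      simp only [hrep]
      rw [Finset.sum_neg_distrib, neg_eq_zero, Finset.sum_comm]
      refine Finset.sum_eq_zero fun j _ => ?_
      rw [← Finset.mul_sum, hJAdiv' j, mul_zero]
    rw [hS1, hS2, hS3]
    ring
  · ---------------------------------------------------------------- PART (ii)
    intro bw
    simp only [hν]
    have hψw : ∀ w' : W, HasFDerivAt (fun w'' : W => HA z + ⟪C z, w''⟫ + (1 / 2) * ‖w''‖ ^ 2)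
        (innerSL ℝ (C z + w')) w' := by
      intro w'
      have h1 : HasFDerivAt (fun w'' : W => ⟪C z, w''⟫) (innerSL ℝ (C z)) w' :=
        (innerSL ℝ (C z)).hasFDerivAt
      have h := (h1.const_add (HA z)).add (aux_halfnormsq w')
      rwa [← map_add] at h
    have hgw : ∀ w' : W, HasFDerivAt
        (fun w'' : W => Real.exp (-β * (HA z + ⟪C z, w''⟫ + (1 / 2) * ‖w''‖ ^ 2)))
        (innerSL ℝ ((-β * Real.exp (-β * (HA z + ⟪C z, w'⟫ + (1 / 2) * ‖w'‖ ^ 2)))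
          • (C z + w'))) w' :=
      fun w' => aux_hasFDerivAt_exp_neg_mul β (hψw w')
    have hgrad : ∀ w' : W,
        gradient (fun u : W => Real.exp (-β * (HA z + ⟪C z, u⟫ + 1 / 2 * ‖u‖ ^ 2))) w'
        = (-β * Real.exp (-β * (HA z + ⟪C z, w'⟫ + (1 / 2) * ‖w'‖ ^ 2))) • (C z + w') := by
      intro w'
      refine HasGradientAt.gradient ?_
      rw [hasGradientAt_iff_hasFDerivAt]
      have he : (innerSL ℝ ((-β * Real.exp (-β * (HA z + ⟪C z, w'⟫ + (1 / 2) * ‖w'‖ ^ 2)))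
          • (C z + w')) : W →L[ℝ] ℝ)
          = InnerProductSpace.toDual ℝ W
            ((-β * Real.exp (-β * (HA z + ⟪C z, w'⟫ + (1 / 2) * ‖w'‖ ^ 2))) • (C z + w')) := by
        ext y; simp [InnerProductSpace.toDual_apply_apply]
      rw [← he]
      exact hgw w'
    set gw : ℝ := Real.exp (-β * (HA z + ⟪C z, w⟫ + (1 / 2) * ‖w‖ ^ 2)) with hgwdef
    set Ds : W →L[ℝ] W := ((1 : ℝ) / 2) • (D + ContinuousLinearMap.adjoint D) with hDsdef
    -- first divergence
    have hD1 : HasFDerivAt (fun w' : W => Real.exp (-β * (HA z + ⟪C z, w'⟫ + 1 / 2 * ‖w'‖ ^ 2))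
          • D (w' + C z))
        (gw • (D.comp (ContinuousLinearMap.id ℝ W))
          + (innerSL ℝ ((-β * gw) • (C z + w))).smulRight (D (w + C z))) w :=
      (hgw w).smul (D.hasFDerivAt.comp w ((hasFDerivAt_id w).add_const (C z)))
    -- second divergence
    have hfunrw : (fun w' : W => Ds
          (gradient (fun u : W => Real.exp (-β * (HA z + ⟪C z, u⟫ + 1 / 2 * ‖u‖ ^ 2))) w'))
        = fun w' : W => Ds ((-β * Real.exp (-β * (HA z + ⟪C z, w'⟫ + (1 / 2) * ‖w'‖ ^ 2)))
            • (C z + w')) := by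
      funext w'
      rw [hgrad w']
    have hG2 : HasFDerivAt (fun w' : W =>
          (-β * Real.exp (-β * (HA z + ⟪C z, w'⟫ + (1 / 2) * ‖w'‖ ^ 2))) • (C z + w'))
        ((-β * gw) • (ContinuousLinearMap.id ℝ W)
          + ((-β) • innerSL ℝ ((-β * gw) • (C z + w))).smulRight (C z + w)) w :=
      ((hgw w).const_mul (-β)).smul ((hasFDerivAt_id w).const_add (C z))
    have hD2 : HasFDerivAt (fun w' : W =>
          Ds ((-β * Real.exp (-β * (HA z + ⟪C z, w'⟫ + (1 / 2) * ‖w'‖ ^ 2))) • (C z + w')))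
        (Ds.comp ((-β * gw) • (ContinuousLinearMap.id ℝ W)
          + ((-β) • innerSL ℝ ((-β * gw) • (C z + w))).smulRight (C z + w))) w :=
      Ds.hasFDerivAt.comp w hG2
    rw [hfunrw, hD1.fderiv, hD2.fderiv]
    -- expand the summands
    have hterm1 : ∀ i, ⟪(gw • (D.comp (ContinuousLinearMap.id ℝ W))
        + (innerSL ℝ ((-β * gw) • (C z + w))).smulRight (D (w + C z))) (bw i), bw i⟫
        = gw * ⟪D (bw i), bw i⟫
          + (-β * gw) * (⟪C z + w, bw i⟫ * ⟪D (w + C z), bw i⟫) := by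
      intro i
      simp only [ContinuousLinearMap.add_apply, ContinuousLinearMap.smul_apply,
        ContinuousLinearMap.smulRight_apply, ContinuousLinearMap.coe_comp',
        Function.comp_apply, ContinuousLinearMap.coe_id', id_eq, innerSL_apply_apply,
        inner_add_left, real_inner_smul_left, smul_eq_mul]
      ring
    have hterm2 : ∀ i, ⟪(Ds.comp ((-β * gw) • (ContinuousLinearMap.id ℝ W)
        + ((-β) • innerSL ℝ ((-β * gw) • (C z + w))).smulRight (C z + w))) (bw i), bw i⟫
        = (-β * gw) * ⟪Ds (bw i), bw i⟫
          + (β * (β * gw)) * (⟪C z + w, bw i⟫ * ⟪Ds (C z + w), bw i⟫) := by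
      intro i
      simp only [ContinuousLinearMap.add_apply, ContinuousLinearMap.smul_apply,
        ContinuousLinearMap.smulRight_apply, ContinuousLinearMap.coe_comp',
        Function.comp_apply, ContinuousLinearMap.coe_id', id_eq, innerSL_apply_apply,
        real_inner_smul_left, smul_eq_mul, map_add, map_smul, inner_add_left,
        inner_smul_left, RCLike.star_def, starRingEnd_apply, star_trivial]
      ring
    simp only [hterm1, hterm2]
    rw [Finset.sum_add_distrib, Finset.sum_add_distrib,
      ← Finset.mul_sum, ← Finset.mul_sum, ← Finset.mul_sum, ← Finset.mul_sum]
    -- Parseval identities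
    have hP1 : ∑ i, ⟪C z + w, bw i⟫ * ⟪D (w + C z), bw i⟫ = ⟪C z + w, D (C z + w)⟫ := by
      rw [show w + C z = C z + w from add_comm _ _]
      calc ∑ i, ⟪C z + w, bw i⟫ * ⟪D (C z + w), bw i⟫
          = ∑ i, ⟪C z + w, bw i⟫ * ⟪bw i, D (C z + w)⟫ := by
            refine Finset.sum_congr rfl fun i _ => ?_
            rw [real_inner_comm (D (C z + w))]
        _ = ⟪C z + w, D (C z + w)⟫ := bw.sum_inner_mul_inner _ _
    have hP2 : ∑ i, ⟪C z + w, bw i⟫ * ⟪Ds (C z + w), bw i⟫ = ⟪C z + w, Ds (C z + w)⟫ := by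
      calc ∑ i, ⟪C z + w, bw i⟫ * ⟪Ds (C z + w), bw i⟫
          = ∑ i, ⟪C z + w, bw i⟫ * ⟪bw i, Ds (C z + w)⟫ := by
            refine Finset.sum_congr rfl fun i _ => ?_
            rw [real_inner_comm (Ds (C z + w))]
        _ = ⟪C z + w, Ds (C z + w)⟫ := bw.sum_inner_mul_inner _ _
    -- symmetrized operator facts
    have hDs_quad : ⟪C z + w, Ds (C z + w)⟫ = ⟪C z + w, D (C z + w)⟫ := by
      rw [hDsdef]
      simp only [ContinuousLinearMap.smul_apply, ContinuousLinearMap.add_apply,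
        real_inner_smul_right, inner_add_right]
      rw [ContinuousLinearMap.adjoint_inner_right]
      rw [real_inner_comm (D (C z + w)) (C z + w)]
      ring
    have hDs_tr : ∑ i, ⟪Ds (bw i), bw i⟫ = ∑ i, ⟪D (bw i), bw i⟫ := by
      refine Finset.sum_congr rfl fun i _ => ?_
      rw [hDsdef]
      simp only [ContinuousLinearMap.smul_apply, ContinuousLinearMap.add_apply,
        real_inner_smul_left, inner_add_left]
      rw [ContinuousLinearMap.adjoint_inner_left, real_inner_comm (bw i) (D (bw i))]
      ring
    rw [hP1, hP2, hDs_quad, hDs_tr]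
    have hβne : β ≠ 0 := ne_of_gt hβ
    field_simp
    ring
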